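/- Let k ≥ 4. Each of the following two permutations π of {1,…,2k+1} is realized by a second minimal (2k+1)-orbit of some continuous map f : ℝ → ℝ: (a) π agrees with the Stefan permutation π_S except π(2) = 2k, π(3) = 2k+1, π(2k−1) = 2, π(2k) = 3; (b) π agrees with π_S except π(2) = 2k−1, π(3) = 2k+1, π(4) = 2k. -/

import Mathlib

/-- `x` is a periodic point of `f` of (exact) period `n`. -/
def PeriodicPtOfPeriod (f : ℝ → ℝ) (n : ℕ) (x : ℝ) : Prop :=
  f^[n] x = x ∧ ∀ j, 1 ≤ j → j < n → f^[j] x ≠ x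

/-- `β 1 < β 2 < ⋯ < β m` is an `m`-orbit of `f` with permutation `σ`:
each `β t` is a periodic point of period `m`, `σ` permutes `{1,…,m}`,
and `f (β t) = β (σ t)`. -/
def IsOrbitWithPerm (f : ℝ → ℝ) (m : ℕ) (β : ℕ → ℝ) (σ : ℕ → ℕ) : Prop :=
  StrictMonoOn β (Set.Icc 1 m) ∧
  (∀ t ∈ Set.Icc 1 m, PeriodicPtOfPeriod f m (β t)) ∧
  Set.BijOn σ (Set.Icc 1 m) (Set.Icc 1 m) ∧
  (∀ t ∈ Set.Icc 1 m, f (β t) = β (σ t))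

/-- A `(2k+1)`-orbit `β` of `f` is second minimal: `f` has a periodic point of
period `2k−1` with forward orbit in `[β 1, β (2k+1)]`, and no periodic point of
odd period `q` with `1 < q < 2k−1` whose forward orbit lies in `[β 1, β (2k+1)]`. -/
def SecondMinimalOrbit (f : ℝ → ℝ) (k : ℕ) (β : ℕ → ℝ) : Prop :=
  (∃ y, PeriodicPtOfPeriod f (2*k-1) y ∧
      ∀ j : ℕ, f^[j] y ∈ Set.Icc (β 1) (β (2*k+1))) ∧
  ∀ q, Odd q → 1 < q → q < 2*k-1 →
    ¬ ∃ y, PeriodicPtOfPeriod f q y ∧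
        ∀ j : ℕ, f^[j] y ∈ Set.Icc (β 1) (β (2*k+1))

/-- The Stefan permutation of `{1,…,2k+1}`. -/
def stefanPerm (k : ℕ) (t : ℕ) : ℕ :=
  if t = 1 then k+1 else if t ≤ k+1 then 2*k+3-t else 2*k+2-t

/-- The permutation `π` of `{1,…,2k+1}` is realized by a second minimal
`(2k+1)`-orbit of some continuous map. -/
def RealizedSM (k : ℕ) (π : ℕ → ℕ) : Prop :=
  ∃ f : ℝ → ℝ, ∃ β : ℕ → ℝ, Continuous f ∧
    IsOrbitWithPerm f (2*k+1) β π ∧ SecondMinimalOrbit f k β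

set_option maxHeartbeats 4000000

def EdgeRel (k : ℕ) (π : ℕ → ℕ) (u v : ℕ) : Prop :=
  min (π u) (π (u+1)) ≤ v ∧ v + 1 ≤ max (π u) (π (u+1))

def hgt (k v : ℕ) : ℕ :=
  if v = 1 then 2*k-3 else if v = 2 then 2*k-5 else if v ≤ k then 2*k+1-2*v
  else if v = 2*k-1 then 2*k-6 else if v = 2*k then 2*k-4 else 2*v-2*k-2

def cwalk (k t : ℕ) : ℕ :=
  if t = 0 then k+1
  else if t % 2 = 1 ∧ t ≤ 2*k-7 then k+1-(t+1)/2
  else if t % 2 = 0 ∧ t ≤ 2*k-6 then k+1+t/2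
  else if t = 2*k-5 then 3
  else if t = 2*k-4 then 2*k
  else if t = 2*k-3 then 1
  else k+1

noncomputable def ctd (k : ℕ) (π : ℕ → ℕ) (x : ℝ) : ℝ :=
  (π 1 : ℝ) + ∑ i ∈ Finset.Ico 1 (2*k+1),
    ((π (i+1) : ℝ) - (π i : ℝ)) * (min (max x (i:ℝ)) ((i:ℝ)+1) - (i:ℝ))

lemma ctd_cont (k : ℕ) (π : ℕ → ℕ) : Continuous (ctd k π) := by
  unfold ctd
  refine continuous_const.add (continuous_finset_sum _ (fun i _ => ?_))
  exact continuous_const.mul (((continuous_id.max continuous_const).min continuous_const).sub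
    continuous_const)

lemma ctd_eval (k : ℕ) (π : ℕ → ℕ) (j : ℕ) (hj1 : 1 ≤ j) (hj2 : j ≤ 2*k) (x : ℝ)
    (hx1 : (j:ℝ) ≤ x) (hx2 : x ≤ (j:ℝ)+1) :
    ctd k π x = (π j : ℝ) + ((π (j+1) : ℝ) - (π j : ℝ)) * (x - (j:ℝ)) := by
  unfold ctd
  have key : ∀ i ∈ Finset.Ico 1 (2*k+1),
      ((π (i+1) : ℝ) - (π i : ℝ)) * (min (max x (i:ℝ)) ((i:ℝ)+1) - (i:ℝ))
      = if i < j then ((π (i+1) : ℝ) - (π i : ℝ))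
        else if i = j then ((π (j+1):ℝ) - (π j : ℝ)) * (x - (j:ℝ)) else 0 := by
    intro i _
    rcases lt_trichotomy i j with h | h | h
    · have hij : (i:ℝ) + 1 ≤ (j:ℝ) := by exact_mod_cast h
      rw [if_pos h, max_eq_left (by linarith), min_eq_right (by linarith)]
      ring
    · subst h
      rw [if_neg (lt_irrefl i), if_pos rfl, max_eq_left (by linarith),
        min_eq_left (by linarith)]
    · have hij : (j:ℝ) + 1 ≤ (i:ℝ) := by exact_mod_cast h
      rw [if_neg (by omega), if_neg (by omega), max_eq_right (by linarith),
        min_eq_left (by linarith)]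
      ring
  rw [Finset.sum_congr rfl key]
  have hsplit : Finset.Ico 1 (2*k+1) = Finset.Ico 1 (j+1) ∪ Finset.Ico (j+1) (2*k+1) := by
    rw [Finset.Ico_union_Ico_eq_Ico (by omega) (by omega)]
  have hdisj : Disjoint (Finset.Ico 1 (j+1)) (Finset.Ico (j+1) (2*k+1)) := by
    apply Finset.Ico_disjoint_Ico_consecutive
  rw [hsplit, Finset.sum_union hdisj]
  have h2 : ∑ i ∈ Finset.Ico (j+1) (2*k+1),
      (if i < j then ((π (i+1) : ℝ) - (π i : ℝ))
        else if i = j then ((π (j+1):ℝ) - (π j : ℝ)) * (x - (j:ℝ)) else 0) = 0 := by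
    apply Finset.sum_eq_zero
    intro i hi
    simp only [Finset.mem_Ico] at hi
    rw [if_neg (by omega), if_neg (by omega)]
  have h1 : ∑ i ∈ Finset.Ico 1 (j+1),
      (if i < j then ((π (i+1) : ℝ) - (π i : ℝ))
        else if i = j then ((π (j+1):ℝ) - (π j : ℝ)) * (x - (j:ℝ)) else 0)
      = ((π j : ℝ) - (π 1 : ℝ)) + ((π (j+1):ℝ) - (π j : ℝ)) * (x - (j:ℝ)) := by
    rw [Finset.sum_Ico_succ_top (by omega), if_neg (lt_irrefl j), if_pos rfl]
    congr 1
    have : ∀ i ∈ Finset.Ico 1 j, (if i < j then ((π (i+1) : ℝ) - (π i : ℝ))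
        else if i = j then ((π (j+1):ℝ) - (π j : ℝ)) * (x - (j:ℝ)) else 0)
        = ((π (i+1) : ℝ) - (π i : ℝ)) := by
      intro i hi
      simp only [Finset.mem_Ico] at hi
      rw [if_pos hi.2]
    rw [Finset.sum_congr rfl this, Finset.sum_Ico_eq_sum_range]
    have := Finset.sum_range_sub (fun m => (π (1+m) : ℝ)) (j-1)
    beta_reduce at this
    calc ∑ i ∈ Finset.range (j-1), ((π (1+i+1) : ℝ) - (π (1+i) : ℝ))
        = ∑ i ∈ Finset.range (j-1), ((fun m => (π (1+m) : ℝ)) (i+1) - (fun m => (π (1+m) : ℝ)) i) := by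
          apply Finset.sum_congr rfl; intro i _; simp only []; ring_nf
      _ = (π (1+(j-1)) : ℝ) - (π (1+0) : ℝ) := by
          simpa using Finset.sum_range_sub (fun m => (π (1+m) : ℝ)) (j-1)
      _ = (π j : ℝ) - (π 1 : ℝ) := by rw [show 1+(j-1) = j by omega, Nat.add_zero]
  rw [h1, h2]
  ring

theorem walk_const (k : ℕ) (hk : 4 ≤ k) (π : ℕ → ℕ)
    (hE1 : ∀ u v, 1 ≤ u → u ≤ 2*k → EdgeRel k π u v →
      (u = k+1 ∧ v = k+1) ∨ ((u ≤ k) ↔ ¬(v ≤ k)))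
    (hE2 : ∀ u v, 1 ≤ u → u ≤ 2*k → EdgeRel k π u v → ¬(u = k+1 ∧ v = k+1) →
      hgt k v ≤ hgt k u + 1)
    (hE3 : ∀ u, 1 ≤ u → u ≤ 2*k → EdgeRel k π u (k+1) → u = 1 ∨ u = k+1)
    (q : ℕ) (hq1 : 1 < q) (hqo : Odd q) (hq2 : q < 2*k-1)
    (w : ℕ → ℕ) (hw : ∀ t, t < q → EdgeRel k π (w t) (w (t+1)))
    (hwm : ∀ t, t ≤ q → 1 ≤ w t ∧ w t ≤ 2*k) (hwc : w q = w 0) :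
    ∀ t, t ≤ q → w t = k+1 := by
  have hq0 : 0 < q := by omega
  set W : ℕ → ℕ := fun t => w (t % q) with hW
  have hWw : ∀ t, t ≤ q → W t = w t := by
    intro t ht
    rcases eq_or_lt_of_le ht with h | h
    · subst h; simp [hW, Nat.mod_self, hwc]
    · simp [hW, Nat.mod_eq_of_lt h]
  have hWm : ∀ t, 1 ≤ W t ∧ W t ≤ 2*k := by
    intro t; exact hwm _ (le_of_lt (Nat.mod_lt _ hq0))
  have h1q : 1 % q = 1 := Nat.mod_eq_of_lt hq1
  have hWnorm : ∀ t, W (t % q) = W t := by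
    intro t; simp only [hW]; rw [Nat.mod_mod_of_dvd _ (dvd_refl q)]
  have hWnorm1 : ∀ t, W (t % q + 1) = W (t+1) := by
    intro t; simp only [hW]
    congr 1
    conv_rhs => rw [Nat.add_mod t 1 q, h1q]
  have hWe : ∀ t, EdgeRel k π (W t) (W (t+1)) := by
    intro t
    have hr : t % q < q := Nat.mod_lt _ hq0
    have he := hw (t % q) hr
    rcases eq_or_ne (t % q + 1) q with h | h
    · have e1 : W t = w (t % q) := rfl
      have e2 : W (t+1) = w 0 := by
        simp only [hW]
        have h0 : (t+1) % q = 0 := by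
          rw [Nat.add_mod t 1 q, h1q, h, Nat.mod_self]
        rw [h0]
      have e3 : w (t % q + 1) = w 0 := by rw [h, hwc]
      rw [e1, e2, ← e3]
      exact he
    · have : W t = w (t % q) := rfl
      rw [this, ← hWnorm1 t]
      have : W (t % q + 1) = w (t % q + 1) := by
        simp only [hW]; rw [Nat.mod_eq_of_lt (by omega : t % q + 1 < q)]
      rw [this]
      exact he
  have hWp : ∀ s t, W (t + q * s) = W t := by
    intro s
    induction s with
    | zero => simp
    | succ s ih => intro t; rw [Nat.mul_succ, ← Nat.add_assoc, Nat.add_comm (t + q*s) q]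
                   simp only [hW, Nat.add_mod_left]
                   have := ih t; simpa [hW] using this
  -- Step A : a loop step exists
  have stepA : ∃ t0, t0 < q ∧ W t0 = k+1 ∧ W (t0+1) = k+1 := by
    by_contra hno
    push_neg at hno
    have cross : ∀ t, (W t ≤ k ↔ ¬ (W (t+1) ≤ k)) := by
      intro t
      have hb := hWm t
      rcases hE1 (W t) (W (t+1)) hb.1 hb.2 (hWe t) with h | h
      · exfalso
        have ht' : t % q < q := Nat.mod_lt _ hq0
        apply hno (t % q) ht'
        · rw [hWnorm t]; exact h.1
        · rw [hWnorm1 t]; exact h.2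
      · exact h
    have par : ∀ t, (W t ≤ k ↔ (W 0 ≤ k ↔ Even t)) := by
      intro t
      induction t with
      | zero => simp
      | succ t ih =>
        have := cross t
        rw [Nat.even_add_one]
        tauto
    have h0 := par q
    have hWq : W q = W 0 := by simp [hW, Nat.mod_self, hwc]
    have hnev : ¬ Even q := Nat.not_even_iff_odd.mpr hqo
    rw [hWq] at h0
    tauto
  -- Step B
  intro t ht
  by_contra hne
  obtain ⟨t0, ht0q, ht0, ht0'⟩ := stepA
  have hex : ∃ t1, t1 < q ∧ W t1 ≠ k+1 := by
    rcases eq_or_lt_of_le ht with h | h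
    · refine ⟨0, hq0, ?_⟩
      have : W 0 = w 0 := hWw 0 (by omega)
      rw [this, ← hwc, ← hWw q (le_refl q)]
      subst h; rwa [hWw t ht] at *
    · exact ⟨t, h, by rwa [hWw t ht]⟩
  obtain ⟨t1, ht1q, ht1⟩ := hex
  -- m: first position ≥ t0 with W ≠ k+1
  have hPex : ∃ s, t0 ≤ s ∧ W s ≠ k+1 := by
    refine ⟨t1 + q * 1, by omega, ?_⟩
    rw [hWp 1 t1]; exact ht1
  classical
  obtain ⟨m, hmge, hmne, hmmin⟩ : ∃ m, t0 ≤ m ∧ W m ≠ k+1 ∧ ∀ s, s < m → ¬(t0 ≤ s ∧ W s ≠ k+1) := by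
    have hPex' : ∃ s, t0 ≤ s ∧ W s ≠ k+1 := hPex
    exact ⟨Nat.find hPex', (Nat.find_spec hPex').1, (Nat.find_spec hPex').2,
      fun s hs => Nat.find_min hPex' hs⟩
  have hmt0 : t0 < m := by
    rcases eq_or_lt_of_le hmge with h | h
    · exfalso; apply hmne; rw [← h]; exact ht0
    · exact h
  obtain ⟨b, hbge, hbeq, hbmin⟩ : ∃ b, m ≤ b ∧ W b = k+1 ∧ ∀ s, s < b → ¬(m ≤ s ∧ W s = k+1) := by
    have hQex : ∃ s, m ≤ s ∧ W s = k+1 := by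
      refine ⟨t0 + q * m, ?_, ?_⟩
      · have : q * m ≥ m := Nat.le_mul_of_pos_left m hq0
        omega
      · rw [hWp m t0]; exact ht0
    exact ⟨Nat.find hQex, (Nat.find_spec hQex).1, (Nat.find_spec hQex).2,
      fun s hs => Nat.find_min hQex hs⟩
  have hbm : m < b := by
    rcases eq_or_lt_of_le hbge with h | h
    · exfalso; apply hmne; rw [h]; exact hbeq
    · exact h
  -- between m and b, W ≠ k+1
  have hmid : ∀ s, m ≤ s → s < b → W s ≠ k+1 := by
    intro s h1 h2 hc
    exact hbmin s h2 ⟨h1, hc⟩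
  -- run of k+1 before m
  have hWm1 : W (m-1) = k+1 := by
    by_contra hc
    rcases eq_or_lt_of_le (Nat.succ_le_of_lt hmt0) with h | h
    · apply hc; rw [show m - 1 = t0 by omega]; exact ht0
    · exact hmmin (m-1) (by omega) ⟨by omega, hc⟩
  -- height chain
  have hchain : ∀ i, m - 1 + i ≤ b - 1 → hgt k (W (m-1+i)) ≤ i := by
    intro i
    induction i with
    | zero =>
      intro _
      rw [Nat.add_zero, hWm1]
      simp only [hgt]
      split_ifs <;> omega
    | succ i ih =>
      intro hi
      have hi' : m - 1 + i ≤ b - 1 := by omega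
      have h1 := ih hi'
      have hb2 := hWm (m-1+i)
      have hnl : ¬ (W (m-1+i) = k+1 ∧ W (m-1+i+1) = k+1) := by
        intro hc
        apply hmid (m-1+i+1) (by omega) (by omega) hc.2
      have := hE2 (W (m-1+i)) (W (m-1+i+1)) hb2.1 hb2.2 (hWe _) hnl
      have heq : m - 1 + (i+1) = m - 1 + i + 1 := by omega
      rw [heq]
      omega
  have hlast : W (b-1) = 1 := by
    have hb2 := hWm (b-1)
    have he : EdgeRel k π (W (b-1)) (k+1) := by
      have := hWe (b-1)
      rwa [show b - 1 + 1 = b by omega, hbeq] at this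
    rcases hE3 (W (b-1)) hb2.1 hb2.2 he with h | h
    · exact h
    · exfalso; exact hmid (b-1) (by omega) (by omega) h
  have hfin := hchain (b - m) (by omega)
  rw [show m - 1 + (b - m) = b - 1 by omega, hlast] at hfin
  have h1v : hgt k 1 = 2*k-3 := by simp [hgt]
  rw [h1v] at hfin
  -- b ≤ m - 1 + q
  have hbq : b ≤ m - 1 + q := by
    by_contra hc
    push_neg at hc
    apply hmid (m - 1 + q) (by omega) (by omega)
    have : W (m - 1 + q) = W (m-1) := by
      have := hWp 1 (m-1); rwa [Nat.mul_one] at this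
    rw [this]; exact hWm1
  obtain ⟨qq, hqqe⟩ := hqo
  omega

lemma chain (k : ℕ) (π : ℕ → ℕ)
    (hπne : ∀ j, 1 ≤ j → j ≤ 2*k → (π j : ℝ) ≠ (π (j+1) : ℝ))
    (n : ℕ) (w : ℕ → ℕ)
    (hw : ∀ t, t < n → EdgeRel k π (w t) (w (t+1)))
    (hwm : ∀ t, t ≤ n → 1 ≤ w t ∧ w t ≤ 2*k) :
    ∃ u v c d : ℝ, u ≤ v ∧ c ≠ 0 ∧
      (w 0 : ℝ) ≤ u ∧ v ≤ (w 0 : ℝ) + 1 ∧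
      (∀ t, t ≤ n → ∀ x, x ∈ Set.Icc u v → (ctd k π)^[t] x ∈ Set.Icc (w t : ℝ) ((w t : ℝ)+1)) ∧
      (∀ x ∈ Set.Icc u v, (ctd k π)^[n] x = c*x + d) ∧
      ((c*u+d = (w n : ℝ) ∧ c*v+d = (w n : ℝ)+1) ∨
        (c*u+d = (w n : ℝ)+1 ∧ c*v+d = (w n : ℝ))) := by
  induction n with
  | zero =>
    refine ⟨(w 0 : ℝ), (w 0 : ℝ)+1, 1, 0, by linarith, one_ne_zero, le_refl _, le_refl _,
      ?_, ?_, ?_⟩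
    · intro t ht x hx
      have : t = 0 := Nat.le_zero.mp ht
      subst this
      simpa using hx
    · intro x _; simp
    · left; constructor <;> ring
  | succ n ih =>
    obtain ⟨u, v, c, d, huv, hc, hu0, hv0, hiter, haff, hend⟩ :=
      ih (fun t ht => hw t (by omega)) (fun t ht => hwm t (by omega))
    have hjb := hwm n (by omega)
    set f := ctd k π with hf
    set a := (π (w n) : ℝ) with ha
    set b := (π (w n + 1) : ℝ) with hb
    have hs : b - a ≠ 0 := sub_ne_zero_of_ne (hπne (w n) hjb.1 hjb.2).symm
    obtain ⟨hminle, hmaxge⟩ := hw n (by omega)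
    have hmin : min a b ≤ (w (n+1) : ℝ) := by
      rw [ha, hb, ← Nat.cast_min]; exact_mod_cast hminle
    have hmax : (w (n+1) : ℝ) + 1 ≤ max a b := by
      rw [ha, hb, ← Nat.cast_max]; exact_mod_cast hmaxge
    set c2 := (b-a)*c with hc2def
    set d2 := (b-a)*d + a - (b-a)*(w n : ℝ) with hd2def
    have hc2 : c2 ≠ 0 := mul_ne_zero hs hc
    have haff2 : ∀ x ∈ Set.Icc u v, f^[n+1] x = c2*x + d2 := by
      intro x hx
      rw [Function.iterate_succ_apply']
      have hmem := hiter n (Nat.le_refl n) x hx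
      rw [haff x hx] at hmem
      have heval := ctd_eval k π (w n) hjb.1 hjb.2 (c*x+d) hmem.1 hmem.2
      rw [haff x hx, ← hf] at *
      rw [heval, hc2def, hd2def, ha, hb]
      ring
    set W' := (w (n+1) : ℝ) with hW'
    set x1 := (W' - d2)/c2 with hx1def
    set x2 := (W' + 1 - d2)/c2 with hx2def
    have hg1 : c2*x1 + d2 = W' := by rw [hx1def]; field_simp; ring
    have hg2 : c2*x2 + d2 = W' + 1 := by rw [hx2def]; field_simp; ring
    have hpair : (c2*u+d2 = a ∧ c2*v+d2 = b) ∨ (c2*u+d2 = b ∧ c2*v+d2 = a) := by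
      rcases hend with ⟨h1,h2⟩|⟨h1,h2⟩
      · left
        constructor
        · have e : c2*u + d2 = (b-a)*(c*u+d) + a - (b-a)*(w n : ℝ) := by
            rw [hc2def, hd2def]; ring
          rw [e, h1]; ring
        · have e : c2*v + d2 = (b-a)*(c*v+d) + a - (b-a)*(w n : ℝ) := by
            rw [hc2def, hd2def]; ring
          rw [e, h2]; ring
      · right
        constructor
        · have e : c2*u + d2 = (b-a)*(c*u+d) + a - (b-a)*(w n : ℝ) := by
            rw [hc2def, hd2def]; ring
          rw [e, h1]; ring
        · have e : c2*v + d2 = (b-a)*(c*v+d) + a - (b-a)*(w n : ℝ) := by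
            rw [hc2def, hd2def]; ring
          rw [e, h2]; ring
    have hsol : ∀ y : ℝ, min a b ≤ y → y ≤ max a b → u ≤ (y - d2)/c2 ∧ (y - d2)/c2 ≤ v := by
      intro y hy1 hy2
      rcases lt_or_gt_of_ne hc2 with hneg | hpos
      · have hcmp : c2*v + d2 ≤ c2*u + d2 := by nlinarith
        have hlo : c2*v+d2 ≤ y ∧ y ≤ c2*u+d2 := by
          rcases hpair with ⟨h1,h2⟩|⟨h1,h2⟩
          · have hba : b ≤ a := by rw [← h1, ← h2]; exact hcmp
            exact ⟨by rw [h2]; exact (min_eq_right hba) ▸ hy1,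
                   by rw [h1]; exact (max_eq_left hba) ▸ hy2⟩
          · have hab : a ≤ b := by rw [← h2, ← h1]; exact hcmp
            exact ⟨by rw [h2]; exact (min_eq_left hab) ▸ hy1,
                   by rw [h1]; exact (max_eq_right hab) ▸ hy2⟩
        constructor
        · rw [le_div_iff_of_neg hneg]
          linarith [hlo.2]
        · rw [div_le_iff_of_neg hneg]
          linarith [hlo.1]
      · have hcmp : c2*u + d2 ≤ c2*v + d2 := by nlinarith
        have hlo : c2*u+d2 ≤ y ∧ y ≤ c2*v+d2 := by
          rcases hpair with ⟨h1,h2⟩|⟨h1,h2⟩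
          · have hab : a ≤ b := by rw [← h1, ← h2]; exact hcmp
            exact ⟨by rw [h1]; exact (min_eq_left hab) ▸ hy1,
                   by rw [h2]; exact (max_eq_right hab) ▸ hy2⟩
          · have hba : b ≤ a := by rw [← h1, ← h2]; exact hcmp
            exact ⟨by rw [h1]; exact (min_eq_right hba) ▸ hy1,
                   by rw [h2]; exact (max_eq_left hba) ▸ hy2⟩
        constructor
        · rw [le_div_iff₀ hpos]
          linarith [hlo.1]
        · rw [div_le_iff₀ hpos]
          linarith [hlo.2]
    have hx1b : u ≤ x1 ∧ x1 ≤ v := hsol W' hmin (by linarith)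
    have hx2b : u ≤ x2 ∧ x2 ≤ v := hsol (W'+1) (by linarith) hmax
    have hsub : Set.Icc (min x1 x2) (max x1 x2) ⊆ Set.Icc u v :=
      Set.Icc_subset_Icc (le_min hx1b.1 hx2b.1) (max_le hx1b.2 hx2b.2)
    have hdiff : x2 - x1 = 1/c2 := by
      rw [hx1def, hx2def]
      field_simp
      ring
    refine ⟨min x1 x2, max x1 x2, c2, d2, min_le_max, hc2,
      le_trans hu0 (le_min hx1b.1 hx2b.1), le_trans (max_le hx1b.2 hx2b.2) hv0, ?_, ?_, ?_⟩
    · intro t ht x hx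
      rcases Nat.lt_or_ge t (n+1) with h | h
      · exact hiter t (by omega) x (hsub hx)
      · have : t = n+1 := by omega
        subst this
        rw [haff2 x (hsub hx)]
        rcases le_total x1 x2 with h12 | h12
        · have hc2pos : 0 < c2 := by
            rcases lt_or_gt_of_ne hc2 with hneg | hpos
            · exfalso
              have : 1/c2 < 0 := div_neg_of_pos_of_neg one_pos hneg
              rw [← hdiff] at this
              linarith
            · exact hpos
          rw [min_eq_left h12, max_eq_right h12] at hx
          constructor
          · have := mul_le_mul_of_nonneg_left hx.1 (le_of_lt hc2pos)
            linarith [hg1]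
          · have := mul_le_mul_of_nonneg_left hx.2 (le_of_lt hc2pos)
            linarith [hg2]
        · have hc2neg : c2 < 0 := by
            rcases lt_or_gt_of_ne hc2 with hneg | hpos
            · exact hneg
            · exfalso
              have : 0 < 1/c2 := div_pos one_pos hpos
              rw [← hdiff] at this
              linarith
          rw [min_eq_right h12, max_eq_left h12] at hx
          constructor
          · have := mul_le_mul_of_nonpos_left hx.2 (le_of_lt hc2neg)
            linarith [hg1]
          · have := mul_le_mul_of_nonpos_left hx.1 (le_of_lt hc2neg)
            linarith [hg2]
    · intro x hx
      exact haff2 x (hsub hx)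
    · rcases le_total x1 x2 with h12 | h12
      · rw [min_eq_left h12, max_eq_right h12]
        left
        exact ⟨hg1, hg2⟩
      · rw [min_eq_right h12, max_eq_left h12]
        right
        exact ⟨hg2, hg1⟩

lemma iterate_mod (f : ℝ → ℝ) (q : ℕ) (hq : 0 < q) (x : ℝ) (hx : f^[q] x = x) :
    ∀ j, f^[j] x = f^[j % q] x := by
  have hmul : ∀ m, f^[q * m] x = x := by
    intro m
    induction m with
    | zero => simp
    | succ m ih => rw [Nat.mul_succ, Function.iterate_add_apply, hx, ih]
  intro j
  conv_lhs => rw [show j = j % q + q * (j / q) by rw [Nat.mod_add_div]]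
  rw [Function.iterate_add_apply, hmul]

lemma periodic_of_closed_walk (k : ℕ) (π : ℕ → ℕ)
    (hπne : ∀ j, 1 ≤ j → j ≤ 2*k → (π j : ℝ) ≠ (π (j+1) : ℝ))
    (q : ℕ) (hq : 1 ≤ q) (w : ℕ → ℕ)
    (hw : ∀ t, t < q → EdgeRel k π (w t) (w (t+1)))
    (hwm : ∀ t, t ≤ q → 1 ≤ w t ∧ w t ≤ 2*k)
    (hclosed : w q = w 0) :
    ∃ x : ℝ, (ctd k π)^[q] x = x ∧
      ∀ t, t ≤ q → (ctd k π)^[t] x ∈ Set.Icc (w t : ℝ) ((w t : ℝ)+1) := by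
  obtain ⟨u, v, c, d, huv, hc, hu0, hv0, hiter, haff, hend⟩ := chain k π hπne q w hw hwm
  set f := ctd k π with hf
  have hcont : Continuous f := ctd_cont k π
  have hgc : ContinuousOn (fun x => f^[q] x - x) (Set.Icc u v) :=
    ((hcont.iterate q).sub continuous_id).continuousOn
  have humem : u ∈ Set.Icc u v := Set.left_mem_Icc.mpr huv
  have hvmem : v ∈ Set.Icc u v := Set.right_mem_Icc.mpr huv
  rw [hclosed] at hend
  rcases hend with ⟨h1, h2⟩ | ⟨h1, h2⟩
  · -- f^[q] u = w 0 ≤ u, f^[q] v = w 0 + 1 ≥ v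
    have hgu : f^[q] u - u ≤ 0 := by
      rw [haff u humem, h1]; linarith
    have hgv : 0 ≤ f^[q] v - v := by
      rw [haff v hvmem, h2]; linarith
    have := intermediate_value_Icc huv hgc
    have h0 : (0:ℝ) ∈ Set.Icc (f^[q] u - u) (f^[q] v - v) := ⟨hgu, hgv⟩
    obtain ⟨x, hxmem, hx0⟩ := this h0
    have hfix : f^[q] x = x := by
      have : f^[q] x - x = 0 := hx0
      linarith
    exact ⟨x, hfix, fun t ht => hiter t ht x hxmem⟩
  · have hgu : 0 ≤ f^[q] u - u := by
      rw [haff u humem, h1]; linarith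
    have hgv : f^[q] v - v ≤ 0 := by
      rw [haff v hvmem, h2]; linarith
    have := intermediate_value_Icc' huv hgc
    have h0 : (0:ℝ) ∈ Set.Icc (f^[q] v - v) (f^[q] u - u) := ⟨hgv, hgu⟩
    obtain ⟨x, hxmem, hx0⟩ := this h0
    have hfix : f^[q] x = x := by
      have : f^[q] x - x = 0 := hx0
      linarith
    exact ⟨x, hfix, fun t ht => hiter t ht x hxmem⟩

lemma cwalk_zero (k : ℕ) : cwalk k 0 = k+1 := by unfold cwalk; split_ifs <;> omega

lemma cwalk_last (k : ℕ) (hk : 4 ≤ k) : cwalk k (2*k-2) = k+1 := by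
  unfold cwalk; split_ifs <;> omega

lemma cwalk_mem (k : ℕ) (hk : 4 ≤ k) (t : ℕ) : 1 ≤ cwalk k t ∧ cwalk k t ≤ 2*k := by
  unfold cwalk; split_ifs <;> omega

lemma cwalk_ne (k : ℕ) (hk : 4 ≤ k) (t : ℕ) (h1 : 1 ≤ t) (h2 : t ≤ 2*k-3) :
    cwalk k t ≠ k+1 := by
  unfold cwalk; split_ifs <;> omega

lemma cwalk_one (k : ℕ) (hk : 4 ≤ k) : cwalk k 1 = k := by
  unfold cwalk
  rw [if_neg (by omega : ¬ (1:ℕ) = 0),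
    if_pos (⟨by norm_num, by omega⟩ : (1:ℕ) % 2 = 1 ∧ 1 ≤ 2*k-7)]
  omega

theorem realized_main (k : ℕ) (hk : 4 ≤ k) (π o : ℕ → ℕ)
    (ho0 : o 0 = 1) (hoN : o (2*k+1) = 1)
    (hoπ : ∀ j, j ≤ 2*k → π (o j) = o (j+1))
    (hoinj : ∀ i, i ≤ 2*k → ∀ j, j ≤ 2*k → o i = o j → i = j)
    (homem : ∀ j, j ≤ 2*k → 1 ≤ o j ∧ o j ≤ 2*k+1)
    (hπk1 : π (k+1) = k+2) (hπk2 : π (k+2) = k)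
    (hE1 : ∀ u v, 1 ≤ u → u ≤ 2*k → EdgeRel k π u v →
      (u = k+1 ∧ v = k+1) ∨ ((u ≤ k) ↔ ¬(v ≤ k)))
    (hE2 : ∀ u v, 1 ≤ u → u ≤ 2*k → EdgeRel k π u v → ¬(u = k+1 ∧ v = k+1) →
      hgt k v ≤ hgt k u + 1)
    (hE3 : ∀ u, 1 ≤ u → u ≤ 2*k → EdgeRel k π u (k+1) → u = 1 ∨ u = k+1)
    (hcw : ∀ t, t < 2*k-2 → EdgeRel k π (cwalk k t) (cwalk k (t+1))) :
    RealizedSM k π := by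
  classical
  set f := ctd k π with hf
  set O : ℕ → ℕ := fun j => o (j % (2*k+1)) with hOdef
  have hn0 : 0 < 2*k+1 := by omega
  have hOmem : ∀ j, 1 ≤ O j ∧ O j ≤ 2*k+1 := by
    intro j
    exact homem _ (by have := Nat.mod_lt j hn0; omega)
  have hπO : ∀ j, π (O j) = O (j+1) := by
    intro j
    have hr : j % (2*k+1) < 2*k+1 := Nat.mod_lt _ hn0
    have h1 : (j+1) % (2*k+1) = (j % (2*k+1) + 1) % (2*k+1) := by
      conv_lhs => rw [Nat.add_mod, Nat.mod_eq_of_lt (show 1 < 2*k+1 by omega)]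
    rcases eq_or_ne (j % (2*k+1) + 1) (2*k+1) with h | h
    · have h0 : (j+1) % (2*k+1) = 0 := by rw [h1, h, Nat.mod_self]
      show π (o (j % (2*k+1))) = o ((j+1) % (2*k+1))
      rw [h0, ho0, hoπ _ (by omega), h, hoN]
    · have hlt : j % (2*k+1) + 1 < 2*k+1 := by omega
      show π (o (j % (2*k+1))) = o ((j+1) % (2*k+1))
      rw [h1, Nat.mod_eq_of_lt hlt, hoπ _ (by omega)]
  have hsurj : ∀ t, 1 ≤ t → t ≤ 2*k+1 → ∃ m, m ≤ 2*k ∧ o m = t := by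
    have himg : Finset.image o (Finset.range (2*k+1)) = Finset.Icc 1 (2*k+1) := by
      apply Finset.eq_of_subset_of_card_le
      · intro x hx
        simp only [Finset.mem_image, Finset.mem_range] at hx
        obtain ⟨m, hm, rfl⟩ := hx
        have := homem m (by omega)
        simp only [Finset.mem_Icc]; omega
      · rw [Finset.card_image_of_injOn, Finset.card_range, Nat.card_Icc]
        · omega
        · intro i hi j hj hij
          simp only [Finset.coe_range, Set.mem_Iio] at hi hj
          exact hoinj i (by omega) j (by omega) hij
    intro t h1 h2
    have : t ∈ Finset.image o (Finset.range (2*k+1)) := by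
      rw [himg]; simp only [Finset.mem_Icc]; omega
    simp only [Finset.mem_image, Finset.mem_range] at this
    obtain ⟨m, hm, hom⟩ := this
    exact ⟨m, by omega, hom⟩
  have hπrange : ∀ t, 1 ≤ t → t ≤ 2*k+1 → 1 ≤ π t ∧ π t ≤ 2*k+1 := by
    intro t h1 h2
    obtain ⟨m, hm, rfl⟩ := hsurj t h1 h2
    have he : π (o m) = O (m+1) := by
      have e : o m = O m := by
        show o m = o (m % (2*k+1)); rw [Nat.mod_eq_of_lt (by omega)]
      rw [e, hπO m]
    rw [he]; exact hOmem (m+1)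
  have hπinj : ∀ s t, 1 ≤ s → s ≤ 2*k+1 → 1 ≤ t → t ≤ 2*k+1 → π s = π t → s = t := by
    intro s t hs1 hs2 ht1 ht2 hst
    obtain ⟨ms, hms, rfl⟩ := hsurj s hs1 hs2
    obtain ⟨mt, hmt, rfl⟩ := hsurj t ht1 ht2
    rw [hoπ ms hms, hoπ mt hmt] at hst
    rcases eq_or_ne (ms+1) (2*k+1) with h1 | h1 <;> rcases eq_or_ne (mt+1) (2*k+1) with h2 | h2
    · congr 1; omega
    · exfalso
      rw [h1, hoN] at hst
      have hst' : o 0 = o (mt+1) := by rw [ho0]; exact hst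
      have := hoinj 0 (by omega) (mt+1) (by omega) hst'
      omega
    · exfalso
      rw [h2, hoN] at hst
      have hst' : o (ms+1) = o 0 := by rw [ho0]; exact hst
      have := hoinj (ms+1) (by omega) 0 (by omega) hst'
      omega
    · have := hoinj (ms+1) (by omega) (mt+1) (by omega) hst
      congr 1; omega
  have hπne : ∀ j, 1 ≤ j → j ≤ 2*k → (π j : ℝ) ≠ (π (j+1) : ℝ) := by
    intro j h1 h2 hc
    have : π j = π (j+1) := by exact_mod_cast hc
    have := hπinj j (j+1) h1 (by omega) (by omega) (by omega) this
    omega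
  have hfβ : ∀ t, 1 ≤ t → t ≤ 2*k+1 → f ((t:ℕ):ℝ) = (π t : ℝ) := by
    intro t h1 h2
    rcases Nat.lt_or_ge t (2*k+1) with h | h
    · have he := ctd_eval k π t h1 (by omega) (t:ℝ) (le_refl _) (by linarith)
      rw [hf, he]; ring
    · have ht : t = 2*k+1 := by omega
      subst ht
      have he := ctd_eval k π (2*k) (by omega) (le_refl _) ((2*k+1 : ℕ):ℝ)
        (by push_cast; linarith) (by push_cast; linarith)
      rw [hf, he]
      push_cast
      ring
  have hOiter : ∀ m, m ≤ 2*k → ∀ j, f^[j] ((o m : ℕ):ℝ) = ((O (m+j) : ℕ):ℝ) := by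
    intro m hm j
    induction j with
    | zero =>
      show ((o m : ℕ):ℝ) = ((O (m+0) : ℕ):ℝ)
      have : O (m+0) = o m := by
        show o ((m+0) % (2*k+1)) = o m
        rw [Nat.add_zero, Nat.mod_eq_of_lt (by omega)]
      rw [this]
    | succ j ih =>
      rw [Function.iterate_succ_apply', ih]
      have hOb := hOmem (m+j)
      rw [hfβ (O (m+j)) hOb.1 hOb.2, hπO (m+j)]
      exact congrArg (fun z => ((O z : ℕ) : ℝ)) (by omega)
  have hβper : ∀ t, 1 ≤ t → t ≤ 2*k+1 → PeriodicPtOfPeriod f (2*k+1) ((t:ℕ):ℝ) := by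
    intro t h1 h2
    obtain ⟨m, hm, rfl⟩ := hsurj t h1 h2
    constructor
    · rw [hOiter m hm (2*k+1)]
      have : O (m + (2*k+1)) = o m := by
        show o ((m + (2*k+1)) % (2*k+1)) = o m
        rw [Nat.add_mod_right, Nat.mod_eq_of_lt (by omega)]
      rw [this]
    · intro j hj1 hj2 heq
      rw [hOiter m hm j] at heq
      have heq' : O (m+j) = o m := by exact_mod_cast heq
      have hlt : (m+j) % (2*k+1) < 2*k+1 := Nat.mod_lt _ hn0
      have hmod : (m+j) % (2*k+1) = m := hoinj _ (by omega) m hm heq'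
      have hmm : (m + j) % (2*k+1) = m % (2*k+1) := by
        rw [hmod, Nat.mod_eq_of_lt (by omega)]
      have hdvd : (2*k+1) ∣ j := by
        have hmq := (Nat.modEq_iff_dvd' (Nat.le_add_right m j)).mp
          (by simpa [Nat.ModEq] using hmm.symm)
        simpa using hmq
      have hjlt : 2*k+1 ≤ j := Nat.le_of_dvd (by omega) hdvd
      omega
  have hnonint : ∀ (y : ℝ) (q0 : ℕ), 1 ≤ q0 → q0 < 2*k+1 → f^[q0] y = y →
      ∀ (t : ℕ) (i : ℕ), 1 ≤ i → i ≤ 2*k+1 → f^[t] y ≠ (i : ℝ) := by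
    intro y q0 h1 h2 hper t i hi1 hi2 heq
    obtain ⟨m, hm, rfl⟩ := hsurj i hi1 hi2
    have hiterm := iterate_mod f q0 (by omega) y hper
    have hge : q0*(t+1) ≥ t+1 := Nat.le_mul_of_pos_left _ (by omega)
    have hy : y = f^[q0*(t+1) - t] (f^[t] y) := by
      rw [← Function.iterate_add_apply, show q0*(t+1) - t + t = q0*(t+1) by omega]
      have hmul : f^[q0*(t+1)] y = y := by
        rw [hiterm (q0*(t+1)), Nat.mul_mod_right, Function.iterate_zero_apply]
      rw [hmul]
    rw [heq, hOiter m hm _] at hy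
    have hb := hOmem (m + (q0*(t+1) - t))
    have hper2 := hβper (O (m + (q0*(t+1) - t))) hb.1 hb.2
    rw [← hy] at hper2
    exact hper2.2 q0 h1 h2 hper
  refine ⟨f, fun t : ℕ => ((t:ℕ):ℝ), ctd_cont k π, ⟨?_, ?_, ⟨?_, ?_, ?_⟩, ?_⟩, ?_, ?_⟩
  · -- StrictMonoOn
    intro s _ t _ hst
    exact Nat.cast_lt.mpr hst
  · -- periodic points
    intro t ht
    simp only [Set.mem_Icc] at ht
    exact hβper t ht.1 ht.2
  · -- MapsTo
    intro t ht
    simp only [Set.mem_Icc] at ht ⊢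
    exact hπrange t ht.1 ht.2
  · -- InjOn
    intro s hs t ht h
    simp only [Set.mem_Icc] at hs ht
    exact hπinj s t hs.1 hs.2 ht.1 ht.2 h
  · -- SurjOn
    intro t ht
    simp only [Set.mem_Icc] at ht
    obtain ⟨m, hm, rfl⟩ := hsurj t ht.1 ht.2
    rcases Nat.eq_zero_or_pos m with h | h
    · subst h
      refine ⟨o (2*k), ?_, ?_⟩
      · have := homem (2*k) (le_refl _)
        simp only [Set.mem_Icc]; omega
      · rw [hoπ (2*k) (le_refl _), hoN, ho0]
    · refine ⟨o (m-1), ?_, ?_⟩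
      · have := homem (m-1) (by omega)
        simp only [Set.mem_Icc]; omega
      · rw [hoπ (m-1) (by omega), show m-1+1 = m by omega]
  · -- f (β t) = β (π t)
    intro t ht
    simp only [Set.mem_Icc] at ht
    exact hfβ t ht.1 ht.2
  · -- existence of 2k-1 periodic orbit
    set w1 : ℕ → ℕ := fun t => if t = 0 then k+1 else cwalk k (t-1) with hw1def
    have hw1m : ∀ t, t ≤ 2*k-1 → 1 ≤ w1 t ∧ w1 t ≤ 2*k := by
      intro t _
      by_cases h : t = 0
      · simp only [hw1def, h, if_pos]; omega
      · simp only [hw1def, if_neg h]; exact cwalk_mem k hk (t-1)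
    have hw1e : ∀ t, t < 2*k-1 → EdgeRel k π (w1 t) (w1 (t+1)) := by
      intro t ht
      rcases Nat.eq_zero_or_pos t with h | h
      · subst h
        have e1 : w1 0 = k+1 := by simp [hw1def]
        have e2 : w1 1 = k+1 := by
          simp only [hw1def, if_neg one_ne_zero]
          exact cwalk_zero k
        rw [e1, e2]
        simp only [EdgeRel]
        rw [show k+1+1 = k+2 by omega, hπk1, hπk2]
        constructor <;> omega
      · have e0 : w1 t = cwalk k (t-1) := by simp only [hw1def, if_neg (by omega : ¬ t = 0)]
        have e1 : w1 (t+1) = cwalk k t := by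
          simp only [hw1def, if_neg (by omega : ¬ t+1 = 0)]
          congr 1
        have he := hcw (t-1) (by omega)
        rw [show t-1+1 = t by omega] at he
        rw [e0, e1]
        exact he
    have hw1c : w1 (2*k-1) = w1 0 := by
      have h1 : w1 (2*k-1) = cwalk k (2*k-2) := by
        have hne : ¬ (2*k-1 = 0) := by omega
        simp only [hw1def, if_neg hne]
        congr 1
      rw [h1, cwalk_last k hk]
      simp [hw1def]
    obtain ⟨x, hxfix, hxit⟩ :=
      periodic_of_closed_walk k π hπne (2*k-1) (by omega) w1 hw1e hw1m hw1c
    refine ⟨x, ⟨hxfix, ?_⟩, ?_⟩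
    · -- exactness
      intro j hj1 hj2 hfj
      have hjper : Function.IsPeriodicPt f j x := hfj
      have hqper : Function.IsPeriodicPt f (2*k-1) x := hxfix
      set d := Function.minimalPeriod f x with hd
      have hdpos : 0 < d := hjper.minimalPeriod_pos (by omega)
      have hdj : d ∣ j := hjper.minimalPeriod_dvd
      have hdq : d ∣ (2*k-1) := hqper.minimalPeriod_dvd
      have hfd : f^[d] x = x := Function.isPeriodicPt_minimalPeriod f x
      have hdlt : d < 2*k-1 := lt_of_le_of_lt (Nat.le_of_dvd (by omega) hdj) hj2
      have hshift : ∀ t, t + d ≤ 2*k-1 → w1 (t+d) = w1 t := by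
        intro t htd
        have hz1 := hxit t (by omega)
        have hz2 := hxit (t+d) htd
        have he : f^[t+d] x = f^[t] x := by
          rw [Function.iterate_add_apply, hfd]
        rw [he] at hz2
        simp only [Set.mem_Icc] at hz1 hz2
        have hni := hnonint x (2*k-1) (by omega) (by omega) hxfix t
        have hb1 := hw1m t (by omega)
        have hb2 := hw1m (t+d) htd
        have hs1 : (w1 t : ℝ) < f^[t] x :=
          lt_of_le_of_ne hz1.1 (Ne.symm (hni (w1 t) hb1.1 (by omega)))
        have hs2 : f^[t] x < (w1 t : ℝ) + 1 := by
          have hne := hni (w1 t + 1) (by omega) (by omega)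
          push_cast at hne
          exact lt_of_le_of_ne hz1.2 hne
        have hs3 : (w1 (t+d) : ℝ) < f^[t] x :=
          lt_of_le_of_ne hz2.1 (Ne.symm (hni (w1 (t+d)) hb2.1 (by omega)))
        have hs4 : f^[t] x < (w1 (t+d) : ℝ) + 1 := by
          have hne := hni (w1 (t+d) + 1) (by omega) (by omega)
          push_cast at hne
          exact lt_of_le_of_ne hz2.2 hne
        have c1 : (w1 t : ℝ) < (w1 (t+d) : ℝ) + 1 := lt_trans hs1 hs4
        have c2 : (w1 (t+d) : ℝ) < (w1 t : ℝ) + 1 := lt_trans hs3 hs2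
        have c1' : w1 t < w1 (t+d) + 1 := by exact_mod_cast c1
        have c2' : w1 (t+d) < w1 t + 1 := by exact_mod_cast c2
        omega
      have hdodd : d % 2 = 1 := by
        rcases Nat.even_or_odd d with he | ho
        · exfalso
          have h2d : (2:ℕ) ∣ d := even_iff_two_dvd.mp he
          have : (2:ℕ) ∣ 2*k-1 := dvd_trans h2d hdq
          obtain ⟨c, hc⟩ := this
          omega
        · exact Nat.odd_iff.mp ho
      rcases eq_or_ne d 1 with hd1 | hd1
      · have hall : ∀ t, t + 1 ≤ 2*k-1 → w1 (t+1) = w1 t := by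
          intro t ht
          have := hshift t (by omega)
          rwa [hd1] at this
        have h20 : w1 2 = w1 0 := by
          rw [show (2:ℕ) = 1 + 1 by rfl, hall 1 (by omega), hall 0 (by omega)]
        have hv2 : w1 2 = k := by
          simp only [hw1def, if_neg (by omega : ¬ (2:ℕ) = 0)]
          exact cwalk_one k hk
        have hv0 : w1 0 = k+1 := by simp [hw1def]
        omega
      · have hd3 : 3 ≤ d := by omega
        have h2d : 2*d ≤ 2*k-1 := by
          obtain ⟨e, he⟩ := hdq
          have he2 : 2 ≤ e := by
            rcases Nat.lt_or_ge e 2 with h | h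
            · interval_cases e <;> omega
            · exact h
          calc 2*d = d*2 := by ring
            _ ≤ d*e := Nat.mul_le_mul_left _ he2
            _ = 2*k-1 := he.symm
        have hwd := hshift 0 (by omega)
        rw [Nat.zero_add] at hwd
        have hv0 : w1 0 = k+1 := by simp [hw1def]
        have hvd : w1 d = cwalk k (d-1) := by
          simp only [hw1def, if_neg (by omega : ¬ d = 0)]
        have hne := cwalk_ne k hk (d-1) (by omega) (by omega)
        rw [hv0, hvd] at hwd
        exact hne hwd
    · -- iterates in the interval
      intro j
      have hrw := iterate_mod f (2*k-1) (by omega) x hxfix j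
      rw [hrw]
      have hr : j % (2*k-1) ≤ 2*k-1 := le_of_lt (Nat.mod_lt _ (by omega))
      have hit := hxit _ hr
      simp only [Set.mem_Icc] at hit ⊢
      have hbw := hw1m _ hr
      constructor
      · have : ((1:ℕ):ℝ) ≤ (w1 (j % (2*k-1)) : ℝ) := by exact_mod_cast hbw.1
        linarith [hit.1]
      · have : (w1 (j % (2*k-1)) : ℝ) + 1 ≤ ((2*k+1:ℕ):ℝ) := by
          push_cast
          have : (w1 (j % (2*k-1)) : ℝ) ≤ 2*(k:ℝ) := by exact_mod_cast hbw.2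
          linarith
        linarith [hit.2]
  · -- nonexistence of smaller odd periods
    intro q hqodd hq1 hq2
    rintro ⟨y, ⟨hyq, hyex⟩, hyin⟩
    have hni := hnonint y q (by omega) (by omega) hyq
    set w2 : ℕ → ℕ := fun t => (⌊f^[t] y⌋).toNat with hw2def
    have hkey : ∀ t, (1 ≤ w2 t ∧ w2 t ≤ 2*k) ∧
        ((w2 t : ℝ) < f^[t] y ∧ f^[t] y < (w2 t : ℝ) + 1) := by
      intro t
      have hz := hyin t
      simp only [Set.mem_Icc] at hz
      have hz1 : (1:ℝ) ≤ f^[t] y := by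
        have := hz.1; push_cast at this; linarith
      have hzn : f^[t] y < 2*(k:ℝ)+1 := by
        have h1 := hz.2
        have h2 := hni t (2*k+1) (by omega) (by omega)
        push_cast at h1 h2
        rcases lt_or_eq_of_le h1 with h | h
        · linarith
        · exact absurd h h2
      have hz1' : 1 < f^[t] y := by
        have h2 := hni t 1 (by omega) (by omega)
        push_cast at h2
        rcases lt_or_eq_of_le hz1 with h | h
        · exact h
        · exact absurd h.symm h2
      have hfl1 : (1:ℤ) ≤ ⌊f^[t] y⌋ := Int.le_floor.mpr (by exact_mod_cast hz1)
      have hfl2 : ⌊f^[t] y⌋ < (2*(k:ℤ)+1) := Int.floor_lt.mpr (by push_cast; linarith)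
      have hcast : ((w2 t : ℕ) : ℝ) = ((⌊f^[t] y⌋ : ℤ) : ℝ) := by
        simp only [hw2def]
        exact_mod_cast congrArg (Int.cast : ℤ → ℝ) (Int.toNat_of_nonneg (by omega))
      have hb1 : 1 ≤ w2 t := by
        simp only [hw2def]
        omega
      have hb2 : w2 t ≤ 2*k := by
        simp only [hw2def]
        omega
      refine ⟨⟨hb1, hb2⟩, ?_, ?_⟩
      · have hle : ((w2 t : ℕ) : ℝ) ≤ f^[t] y := by
          rw [hcast]; exact Int.floor_le _
        exact lt_of_le_of_ne hle (Ne.symm (hni t (w2 t) hb1 (by omega)))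
      · have := Int.lt_floor_add_one (f^[t] y)
        rw [← hcast] at this
        exact this
    have hw2e : ∀ t, t < q → EdgeRel k π (w2 t) (w2 (t+1)) := by
      intro t _
      have h1 := hkey t
      have h2 := hkey (t+1)
      have heval := ctd_eval k π (w2 t) h1.1.1 h1.1.2 (f^[t] y)
        (le_of_lt h1.2.1) (le_of_lt h1.2.2)
      have hstep : f^[t+1] y = ctd k π (f^[t] y) := by
        rw [Function.iterate_succ_apply', hf]
      have hrange : ((min (π (w2 t)) (π (w2 t + 1)) : ℕ) : ℝ) ≤ f^[t+1] y ∧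
          f^[t+1] y ≤ ((max (π (w2 t)) (π (w2 t + 1)) : ℕ) : ℝ) := by
        rw [hstep, heval]
        set A := (π (w2 t) : ℝ)
        set B := (π (w2 t + 1) : ℝ)
        have hc1 : 0 ≤ f^[t] y - (w2 t : ℝ) := by linarith [h1.2.1]
        have hc2 : f^[t] y - (w2 t : ℝ) ≤ 1 := by linarith [h1.2.2]
        rcases le_total A B with hab | hba
        · rw [show ((min (π (w2 t)) (π (w2 t + 1)) : ℕ) : ℝ) = min A B by push_cast; rfl,
            show ((max (π (w2 t)) (π (w2 t + 1)) : ℕ) : ℝ) = max A B by push_cast; rfl,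
            min_eq_left hab, max_eq_right hab]
          constructor <;> nlinarith
        · rw [show ((min (π (w2 t)) (π (w2 t + 1)) : ℕ) : ℝ) = min A B by push_cast; rfl,
            show ((max (π (w2 t)) (π (w2 t + 1)) : ℕ) : ℝ) = max A B by push_cast; rfl,
            min_eq_right hba, max_eq_left hba]
          constructor <;> nlinarith
      constructor
      · have hlt : ((min (π (w2 t)) (π (w2 t + 1)) : ℕ) : ℝ) < (w2 (t+1) : ℝ) + 1 :=
          lt_of_le_of_lt hrange.1 h2.2.2
        have : (min (π (w2 t)) (π (w2 t + 1)) : ℕ) < w2 (t+1) + 1 := by exact_mod_cast hlt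
        omega
      · have hlt : (w2 (t+1) : ℝ) < ((max (π (w2 t)) (π (w2 t + 1)) : ℕ) : ℝ) :=
          lt_of_lt_of_le h2.2.1 hrange.2
        have : w2 (t+1) < (max (π (w2 t)) (π (w2 t + 1)) : ℕ) := by exact_mod_cast hlt
        omega
    have hw2c : w2 q = w2 0 := by
      simp only [hw2def, hyq, Function.iterate_zero_apply]
    have hconst := walk_const k hk π hE1 hE2 hE3 q hq1 hqodd hq2 w2 hw2e
      (fun t _ => (hkey t).1) hw2c
    have hrec : ∀ t, t < q → f^[t+1] y = 3*(k:ℝ)+4 - 2*(f^[t] y) := by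
      intro t ht
      have h1 := hkey t
      have hke := hconst t (by omega)
      have heval := ctd_eval k π (w2 t) h1.1.1 h1.1.2 (f^[t] y)
        (le_of_lt h1.2.1) (le_of_lt h1.2.2)
      rw [hke] at heval
      rw [show k+1+1 = k+2 by omega, hπk1, hπk2] at heval
      have hstep : f^[t+1] y = ctd k π (f^[t] y) := by
        rw [Function.iterate_succ_apply', hf]
      rw [hstep, heval]
      push_cast
      ring
    have hpow : ∀ t, t ≤ q → f^[t] y - (3*(k:ℝ)+4)/3 = (-2)^t * (y - (3*(k:ℝ)+4)/3) := by
      intro t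
      induction t with
      | zero => intro _; simp
      | succ t ih =>
        intro ht
        have he := ih (by omega)
        rw [hrec t (by omega), pow_succ]
        linear_combination (-2 : ℝ) * he
    have hq0 := hpow q (le_refl q)
    rw [hyq] at hq0
    have hne1 : ((-2:ℝ))^q ≠ 1 := by
      intro hcontra
      have habs : |(-2:ℝ)^q| = 2^q := by
        rw [abs_pow]; norm_num
      have h2q : (2:ℝ) ≤ 2^q := by
        calc (2:ℝ) = 2^1 := (pow_one 2).symm
          _ ≤ 2^q := pow_le_pow_right₀ one_le_two (by omega)
      rw [hcontra, abs_one] at habs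
      linarith
    have hyc : y = (3*(k:ℝ)+4)/3 := by
      have hzero : (1 - (-2:ℝ)^q) * (y - (3*(k:ℝ)+4)/3) = 0 := by
        linear_combination hq0
      rcases mul_eq_zero.mp hzero with h | h
      · exfalso; apply hne1; linarith
      · linarith
    have h1y : f^[1] y = y := by
      have hr0 := hrec 0 (by omega)
      rw [Function.iterate_zero_apply] at hr0
      rw [show (0:ℕ)+1 = 1 by rfl] at hr0
      rw [hr0, hyc]
      ring
    exact hyex 1 (le_refl 1) hq1 h1y

def piA (k : ℕ) : ℕ → ℕ := fun t =>
  if t = 2 then 2*k else if t = 3 then 2*k+1 else if t = 2*k-1 then 2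
  else if t = 2*k then 3 else stefanPerm k t

def piB (k : ℕ) : ℕ → ℕ := fun t =>
  if t = 2 then 2*k-1 else if t = 3 then 2*k+1 else if t = 4 then 2*k
  else stefanPerm k t

def orbA (k j : ℕ) : ℕ :=
  if j = 0 then 1
  else if j % 2 = 0 ∧ j ≤ 2*k-2 then k+1+j/2
  else if j % 2 = 1 ∧ j ≤ 2*k-5 then k+2-(j+1)/2
  else if j = 2*k-3 then 2
  else if j = 2*k-1 then 3
  else if j = 2*k then 2*k+1
  else 1

def orbB (k j : ℕ) : ℕ :=
  if j = 0 then 1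
  else if j % 2 = 0 ∧ j ≤ 2*k-6 then k+1+j/2
  else if j % 2 = 1 ∧ j ≤ 2*k-5 then k+2-(j+1)/2
  else if j = 2*k-4 then 2*k
  else if j = 2*k-3 then 2
  else if j = 2*k-2 then 2*k-1
  else if j = 2*k-1 then 3
  else if j = 2*k then 2*k+1
  else 1

lemma hgt_val (k v : ℕ) (hk : 4 ≤ k) (h1 : 1 ≤ v) (h2 : v ≤ 2*k) :
    (v = 1 ∧ hgt k v = 2*k-3) ∨ (v = 2 ∧ hgt k v = 2*k-5) ∨
    (3 ≤ v ∧ v ≤ k ∧ hgt k v = 2*k+1-2*v) ∨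
    (k+1 ≤ v ∧ v ≤ 2*k-2 ∧ hgt k v = 2*v-2*k-2) ∨
    (v = 2*k-1 ∧ hgt k v = 2*k-6) ∨ (v = 2*k ∧ hgt k v = 2*k-4) := by
  unfold hgt; split_ifs <;> omega

lemma cwalk_val (k t : ℕ) (hk : 4 ≤ k) (h2 : t ≤ 2*k-2) :
    (t = 0 ∧ cwalk k t = k+1) ∨ (t % 2 = 1 ∧ t ≤ 2*k-7 ∧ cwalk k t = k+1-(t+1)/2) ∨
    (t % 2 = 0 ∧ 1 ≤ t ∧ t ≤ 2*k-6 ∧ cwalk k t = k+1+t/2) ∨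
    (t = 2*k-5 ∧ cwalk k t = 3) ∨ (t = 2*k-4 ∧ cwalk k t = 2*k) ∨
    (t = 2*k-3 ∧ cwalk k t = 1) ∨ (t = 2*k-2 ∧ cwalk k t = k+1) := by
  unfold cwalk; split_ifs <;> omega

lemma piA_val (k u : ℕ) (hk : 4 ≤ k) (h1 : 1 ≤ u) (h2 : u ≤ 2*k+1) :
    (u = 1 ∧ piA k u = k+1) ∨ (u = 2 ∧ piA k u = 2*k) ∨ (u = 3 ∧ piA k u = 2*k+1) ∨
    (4 ≤ u ∧ u ≤ k+1 ∧ piA k u = 2*k+3-u) ∨ (k+2 ≤ u ∧ u ≤ 2*k-2 ∧ piA k u = 2*k+2-u) ∨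
    (u = 2*k-1 ∧ piA k u = 2) ∨ (u = 2*k ∧ piA k u = 3) ∨ (u = 2*k+1 ∧ piA k u = 1) := by
  unfold piA stefanPerm
  split_ifs <;> omega

lemma orbA_val (k j : ℕ) (hk : 4 ≤ k) (hj : j ≤ 2*k+1) :
    (j = 0 ∧ orbA k j = 1) ∨ (j % 2 = 0 ∧ 1 ≤ j ∧ j ≤ 2*k-2 ∧ orbA k j = k+1+j/2) ∨
    (j % 2 = 1 ∧ j ≤ 2*k-5 ∧ orbA k j = k+2-(j+1)/2) ∨ (j = 2*k-3 ∧ orbA k j = 2) ∨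
    (j = 2*k-1 ∧ orbA k j = 3) ∨ (j = 2*k ∧ orbA k j = 2*k+1) ∨ (j = 2*k+1 ∧ orbA k j = 1) := by
  unfold orbA
  split_ifs <;> omega

lemma orbA_zero (k : ℕ) (hk : 4 ≤ k) : orbA k 0 = 1 := by
  have := orbA_val k 0 hk (by omega); omega

lemma orbA_last (k : ℕ) (hk : 4 ≤ k) : orbA k (2*k+1) = 1 := by
  have := orbA_val k (2*k+1) hk (by omega); omega

lemma orbA_pi (k : ℕ) (hk : 4 ≤ k) : ∀ j, j ≤ 2*k → piA k (orbA k j) = orbA k (j+1) := by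
  intro j hj
  have o1 := orbA_val k j hk (by omega)
  have o2 := orbA_val k (j+1) hk (by omega)
  have hb : 1 ≤ orbA k j ∧ orbA k j ≤ 2*k+1 := by omega
  have p := piA_val k (orbA k j) hk hb.1 hb.2
  omega

lemma orbA_inj (k : ℕ) (hk : 4 ≤ k) : ∀ i, i ≤ 2*k → ∀ j, j ≤ 2*k → orbA k i = orbA k j → i = j := by
  intro i hi j hj he
  have o1 := orbA_val k i hk (by omega)
  have o2 := orbA_val k j hk (by omega)
  omega

lemma orbA_mem (k : ℕ) (hk : 4 ≤ k) : ∀ j, j ≤ 2*k → 1 ≤ orbA k j ∧ orbA k j ≤ 2*k+1 := by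
  intro j hj
  have := orbA_val k j hk (by omega)
  omega

lemma piA_k1 (k : ℕ) (hk : 4 ≤ k) : piA k (k+1) = k+2 := by
  have := piA_val k (k+1) hk (by omega) (by omega); omega

lemma piA_k2 (k : ℕ) (hk : 4 ≤ k) : piA k (k+2) = k := by
  have := piA_val k (k+2) hk (by omega) (by omega); omega

lemma piA_E1 (k : ℕ) (hk : 4 ≤ k) : ∀ u v, 1 ≤ u → u ≤ 2*k → EdgeRel k (piA k) u v →
    (u = k+1 ∧ v = k+1) ∨ ((u ≤ k) ↔ ¬(v ≤ k)) := by
  intro u v h1 h2 he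
  unfold EdgeRel at he
  have p1 := piA_val k u hk (by omega) (by omega)
  have p2 := piA_val k (u+1) hk (by omega) (by omega)
  omega

lemma piA_E2 (k : ℕ) (hk : 4 ≤ k) : ∀ u v, 1 ≤ u → u ≤ 2*k → EdgeRel k (piA k) u v →
    ¬(u = k+1 ∧ v = k+1) → hgt k v ≤ hgt k u + 1 := by
  intro u v h1 h2 he hnl
  unfold EdgeRel at he
  have p1 := piA_val k u hk (by omega) (by omega)
  have p2 := piA_val k (u+1) hk (by omega) (by omega)
  have hvb : 1 ≤ v ∧ v ≤ 2*k := by omega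
  have hu := hgt_val k u hk h1 h2
  have hv := hgt_val k v hk hvb.1 hvb.2
  omega

lemma piA_E3 (k : ℕ) (hk : 4 ≤ k) : ∀ u, 1 ≤ u → u ≤ 2*k → EdgeRel k (piA k) u (k+1) → u = 1 ∨ u = k+1 := by
  intro u h1 h2 he
  unfold EdgeRel at he
  have p1 := piA_val k u hk (by omega) (by omega)
  have p2 := piA_val k (u+1) hk (by omega) (by omega)
  omega

lemma piA_cw (k : ℕ) (hk : 4 ≤ k) : ∀ t, t < 2*k-2 → EdgeRel k (piA k) (cwalk k t) (cwalk k (t+1)) := by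
  intro t ht
  have c1 := cwalk_val k t hk (by omega)
  have c2 := cwalk_val k (t+1) hk (by omega)
  have hb : 1 ≤ cwalk k t ∧ cwalk k t ≤ 2*k+1 := by omega
  have p1 := piA_val k (cwalk k t) hk hb.1 hb.2
  have p2 := piA_val k (cwalk k t + 1) hk (by omega) (by omega)
  unfold EdgeRel
  omega

lemma piB_val (k u : ℕ) (hk : 4 ≤ k) (h1 : 1 ≤ u) (h2 : u ≤ 2*k+1) :
    (u = 1 ∧ piB k u = k+1) ∨ (u = 2 ∧ piB k u = 2*k-1) ∨ (u = 3 ∧ piB k u = 2*k+1) ∨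
    (u = 4 ∧ piB k u = 2*k) ∨
    (5 ≤ u ∧ u ≤ k+1 ∧ piB k u = 2*k+3-u) ∨ (k+2 ≤ u ∧ u ≤ 2*k+1 ∧ piB k u = 2*k+2-u) := by
  unfold piB stefanPerm
  split_ifs <;> omega

lemma orbB_val (k j : ℕ) (hk : 4 ≤ k) (hj : j ≤ 2*k+1) :
    (j = 0 ∧ orbB k j = 1) ∨ (j % 2 = 0 ∧ 1 ≤ j ∧ j ≤ 2*k-6 ∧ orbB k j = k+1+j/2) ∨
    (j % 2 = 1 ∧ j ≤ 2*k-5 ∧ orbB k j = k+2-(j+1)/2) ∨ (j = 2*k-4 ∧ orbB k j = 2*k) ∨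
    (j = 2*k-3 ∧ orbB k j = 2) ∨ (j = 2*k-2 ∧ orbB k j = 2*k-1) ∨
    (j = 2*k-1 ∧ orbB k j = 3) ∨ (j = 2*k ∧ orbB k j = 2*k+1) ∨ (j = 2*k+1 ∧ orbB k j = 1) := by
  unfold orbB
  split_ifs <;> omega

lemma orbB_zero (k : ℕ) (hk : 4 ≤ k) : orbB k 0 = 1 := by
  have := orbB_val k 0 hk (by omega); omega

lemma orbB_last (k : ℕ) (hk : 4 ≤ k) : orbB k (2*k+1) = 1 := by
  have := orbB_val k (2*k+1) hk (by omega); omega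

lemma orbB_pi (k : ℕ) (hk : 4 ≤ k) : ∀ j, j ≤ 2*k → piB k (orbB k j) = orbB k (j+1) := by
  intro j hj
  have o1 := orbB_val k j hk (by omega)
  have o2 := orbB_val k (j+1) hk (by omega)
  have hb : 1 ≤ orbB k j ∧ orbB k j ≤ 2*k+1 := by omega
  have p := piB_val k (orbB k j) hk hb.1 hb.2
  omega

lemma orbB_inj (k : ℕ) (hk : 4 ≤ k) : ∀ i, i ≤ 2*k → ∀ j, j ≤ 2*k → orbB k i = orbB k j → i = j := by
  intro i hi j hj he
  have o1 := orbB_val k i hk (by omega)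
  have o2 := orbB_val k j hk (by omega)
  omega

lemma orbB_mem (k : ℕ) (hk : 4 ≤ k) : ∀ j, j ≤ 2*k → 1 ≤ orbB k j ∧ orbB k j ≤ 2*k+1 := by
  intro j hj
  have := orbB_val k j hk (by omega)
  omega

lemma piB_k1 (k : ℕ) (hk : 4 ≤ k) : piB k (k+1) = k+2 := by
  have := piB_val k (k+1) hk (by omega) (by omega); omega

lemma piB_k2 (k : ℕ) (hk : 4 ≤ k) : piB k (k+2) = k := by
  have := piB_val k (k+2) hk (by omega) (by omega); omega

lemma piB_E1 (k : ℕ) (hk : 4 ≤ k) : ∀ u v, 1 ≤ u → u ≤ 2*k → EdgeRel k (piB k) u v →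
    (u = k+1 ∧ v = k+1) ∨ ((u ≤ k) ↔ ¬(v ≤ k)) := by
  intro u v h1 h2 he
  unfold EdgeRel at he
  have p1 := piB_val k u hk (by omega) (by omega)
  have p2 := piB_val k (u+1) hk (by omega) (by omega)
  omega

lemma piB_E2 (k : ℕ) (hk : 4 ≤ k) : ∀ u v, 1 ≤ u → u ≤ 2*k → EdgeRel k (piB k) u v →
    ¬(u = k+1 ∧ v = k+1) → hgt k v ≤ hgt k u + 1 := by
  intro u v h1 h2 he hnl
  unfold EdgeRel at he
  have p1 := piB_val k u hk (by omega) (by omega)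
  have p2 := piB_val k (u+1) hk (by omega) (by omega)
  have hvb : 1 ≤ v ∧ v ≤ 2*k := by omega
  have hu := hgt_val k u hk h1 h2
  have hv := hgt_val k v hk hvb.1 hvb.2
  omega

lemma piB_E3 (k : ℕ) (hk : 4 ≤ k) : ∀ u, 1 ≤ u → u ≤ 2*k → EdgeRel k (piB k) u (k+1) → u = 1 ∨ u = k+1 := by
  intro u h1 h2 he
  unfold EdgeRel at he
  have p1 := piB_val k u hk (by omega) (by omega)
  have p2 := piB_val k (u+1) hk (by omega) (by omega)
  omega

lemma piB_cw (k : ℕ) (hk : 4 ≤ k) : ∀ t, t < 2*k-2 → EdgeRel k (piB k) (cwalk k t) (cwalk k (t+1)) := by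
  intro t ht
  have c1 := cwalk_val k t hk (by omega)
  have c2 := cwalk_val k (t+1) hk (by omega)
  have hb : 1 ≤ cwalk k t ∧ cwalk k t ≤ 2*k+1 := by omega
  have p1 := piB_val k (cwalk k t) hk hb.1 hb.2
  have p2 := piB_val k (cwalk k t + 1) hk (by omega) (by omega)
  unfold EdgeRel
  omega


/-- Two second minimal permutations arising from setting `(2, 2k−2)`. -/
theorem realized_setting_2_2km2 (k : ℕ) (hk : 4 ≤ k) :
    RealizedSM k (fun t =>
      if t = 2 then 2*k else if t = 3 then 2*k+1 else if t = 2*k-1 then 2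
      else if t = 2*k then 3 else stefanPerm k t) ∧
    RealizedSM k (fun t =>
      if t = 2 then 2*k-1 else if t = 3 then 2*k+1 else if t = 4 then 2*k
      else stefanPerm k t) := by
  constructor
  · exact realized_main k hk (piA k) (orbA k) (orbA_zero k hk) (orbA_last k hk)
      (orbA_pi k hk) (orbA_inj k hk) (orbA_mem k hk) (piA_k1 k hk) (piA_k2 k hk)
      (piA_E1 k hk) (piA_E2 k hk) (piA_E3 k hk) (piA_cw k hk)
  · exact realized_main k hk (piB k) (orbB k) (orbB_zero k hk) (orbB_last k hk)
      (orbB_pi k hk) (orbB_inj k hk) (orbB_mem k hk) (piB_k1 k hk) (piB_k2 k hk)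
      (piB_E1 k hk) (piB_E2 k hk) (piB_E3 k hk) (piB_cw k hk)
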